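/- Let A be a neighborhood of 0 in R^n and c_1, ..., c_m : A → R functions of class C^2 with Dc(0) = 0, where Dc(x) is the m×n Jacobian of c = (c_1,...,c_m). If rank(Dc(x)) ≤ 1 for all x in A, then there exist real numbers α_1, ..., α_m and a symmetric matrix H in R^{n×n} such that the Hessian of c_ℓ at 0 equals α_ℓ H for every ℓ = 1, ..., m. -/

import Mathlib

open Matrix


/-- 2×2 minors of a matrix of rank at most one vanish. -/
lemma aux_minor_eq_zero {m n : ℕ} (M : Matrix (Fin m) (Fin n) ℝ) (h : M.rank ≤ 1)
    (ℓ k : Fin m) (i j : Fin n) : M ℓ i * M k j = M ℓ j * M k i := by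
  by_contra hne
  set P : Matrix (Fin 2) (Fin m) ℝ :=
    Matrix.of (fun a r => if r = ![ℓ, k] a then (1:ℝ) else 0) with hP
  set Q : Matrix (Fin n) (Fin 2) ℝ :=
    Matrix.of (fun s b => if s = ![i, j] b then (1:ℝ) else 0) with hQ
  have hPQ : P * M * Q = Matrix.of (fun a b => M (![ℓ, k] a) (![i, j] b)) := by
    ext a b
    simp [Matrix.mul_apply, hP, hQ, ite_mul, mul_ite, Finset.sum_ite_eq, Finset.sum_ite_eq']
  have hdet : (P * M * Q).det ≠ 0 := by
    rw [hPQ, Matrix.det_fin_two]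
    simpa using sub_ne_zero_of_ne hne
  have hunit : IsUnit (P * M * Q) := by
    rw [Matrix.isUnit_iff_isUnit_det]
    exact isUnit_iff_ne_zero.2 hdet
  have h2 : (P * M * Q).rank = 2 := by
    rw [Matrix.rank_of_isUnit _ hunit]; simp
  have hle : (P * M * Q).rank ≤ M.rank :=
    le_trans (Matrix.rank_mul_le_left _ _) (Matrix.rank_mul_le_right _ _)
  omega


/-- A nonzero symmetric real matrix has a nonzero quadratic form value. -/
lemma aux_quadform_ne_zero {n : ℕ} (B : Matrix (Fin n) (Fin n) ℝ) (hB : B.IsSymm)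
    (h : B ≠ 0) : ∃ v, v ⬝ᵥ B.mulVec v ≠ 0 := by
  by_contra hq
  push_neg at hq
  apply h
  ext i j
  have e1 : ∀ a b : Fin n, (Pi.single a (1:ℝ)) ⬝ᵥ B.mulVec (Pi.single b 1) = B a b := by
    intro a b
    rw [Matrix.mulVec_single, single_dotProduct]
    simp
  have h1 := hq (Pi.single i 1 + Pi.single j 1)
  rw [Matrix.mulVec_add, dotProduct_add, add_dotProduct,
    add_dotProduct, e1, e1, e1, e1] at h1
  have h2 := hq (Pi.single i 1)
  rw [e1] at h2
  have h3 := hq (Pi.single j 1)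
  rw [e1] at h3
  have hs := hB.apply i j
  simp only [Matrix.zero_apply]
  linarith

lemma aux_exists_mu {n : ℕ} (u w : Fin n → ℝ)
    (h : ∀ i j, u i * w j = u j * w i) (hw : w ≠ 0) : ∃ μ : ℝ, u = μ • w := by
  obtain ⟨j₀, hj₀⟩ := Function.ne_iff.mp hw
  simp only [Pi.zero_apply] at hj₀
  refine ⟨u j₀ / w j₀, ?_⟩
  ext i
  have hh := h i j₀
  rw [Pi.smul_apply, smul_eq_mul, div_mul_eq_mul_div, eq_div_iff hj₀]
  linarith

lemma aux_proportional {n : ℕ} (A B : Matrix (Fin n) (Fin n) ℝ)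
    (hA : A.IsSymm) (hB : B.IsSymm) (hB0 : B ≠ 0)
    (h : ∀ (v : Fin n → ℝ) (i j : Fin n),
      A.mulVec v i * B.mulVec v j = A.mulVec v j * B.mulVec v i) :
    ∃ lam : ℝ, A = lam • B := by
  obtain ⟨v₀, hv₀⟩ := aux_quadform_ne_zero B hB hB0
  have hBv₀ : B.mulVec v₀ ≠ 0 := by
    intro h0; rw [h0] at hv₀; simp at hv₀
  obtain ⟨lam, hlam⟩ := aux_exists_mu (A.mulVec v₀) (B.mulVec v₀) (h v₀) hBv₀
  refine ⟨lam, ?_⟩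
  set C := A - lam • B with hC
  have hCsymm : C.IsSymm := by
    rw [Matrix.IsSymm] at hA hB ⊢
    rw [hC, Matrix.transpose_sub, Matrix.transpose_smul, hA, hB]
  have hCmul : ∀ v, C.mulVec v = A.mulVec v - lam • B.mulVec v := by
    intro v; rw [hC, Matrix.sub_mulVec, Matrix.smul_mulVec]
  have hCv₀ : C.mulVec v₀ = 0 := by rw [hCmul, hlam, sub_self]
  have hCpar : ∀ v i j, C.mulVec v i * B.mulVec v j = C.mulVec v j * B.mulVec v i := by
    intro v i j
    simp only [hCmul, Pi.sub_apply, Pi.smul_apply, smul_eq_mul]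
    linear_combination h v i j
  suffices hCw : ∀ w, C.mulVec w = 0 by
    have hC0 : C = 0 := by
      ext i j
      have h1 := congrFun (hCw (Pi.single j 1)) i
      rw [Matrix.mulVec_single] at h1
      simpa using h1
    rw [hC, sub_eq_zero] at hC0
    exact hC0
  intro w
  set q := w ⬝ᵥ C.mulVec w with hq
  set p : ℝ → ℝ := fun t => (v₀ + t • w) ⬝ᵥ B.mulVec (v₀ + t • w) with hpdef
  have hpcont : Continuous p := by
    have hpoly : p = fun t => (v₀ ⬝ᵥ B.mulVec v₀) + t * (v₀ ⬝ᵥ B.mulVec w + w ⬝ᵥ B.mulVec v₀)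
        + t ^ 2 * (w ⬝ᵥ B.mulVec w) := by
      funext t
      simp only [hpdef, Matrix.mulVec_add, Matrix.mulVec_smul, dotProduct_add,
        add_dotProduct, smul_dotProduct, dotProduct_smul, smul_eq_mul]
      ring
    rw [hpoly]
    continuity
  have hp0 : p 0 ≠ 0 := by simpa [hpdef] using hv₀
  have hev : ∀ᶠ t in nhdsWithin (0:ℝ) {(0:ℝ)}ᶜ,
      C.mulVec w = ((t * q) / p t) • B.mulVec (v₀ + t • w) := by
    have h1 : ∀ᶠ t in nhds (0:ℝ), p t ≠ 0 := hpcont.continuousAt.eventually_ne hp0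
    filter_upwards [eventually_nhdsWithin_of_eventually_nhds h1, self_mem_nhdsWithin]
      with t hpt ht
    have ht : t ≠ 0 := ht
    set vt := v₀ + t • w with hvt
    have hBvt : B.mulVec vt ≠ 0 := by
      intro h0
      apply hpt
      rw [hpdef]
      simp only [← hvt, h0, dotProduct_zero]
    obtain ⟨μ, hμ⟩ := aux_exists_mu (C.mulVec vt) (B.mulVec vt) (hCpar vt) hBvt
    have hCvt : C.mulVec vt = t • C.mulVec w := by
      rw [hvt, Matrix.mulVec_add, hCv₀, Matrix.mulVec_smul, zero_add]
    have hsymdot : v₀ ⬝ᵥ C.mulVec w = 0 := by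
      rw [Matrix.dotProduct_mulVec]
      have hvm : C.vecMul v₀ = C.mulVec v₀ := by
        conv_lhs => rw [← hCsymm]
        rw [Matrix.vecMul_transpose]
      rw [hvm, hCv₀, zero_dotProduct]
    have hdot : vt ⬝ᵥ C.mulVec vt = t ^ 2 * q := by
      rw [hCvt, dotProduct_smul, hvt, add_dotProduct, smul_dotProduct,
        hsymdot, smul_eq_mul, smul_eq_mul, ← hq]
      ring
    have hμval : μ * p t = t ^ 2 * q := by
      rw [← hdot, hμ, dotProduct_smul, smul_eq_mul, hpdef]
    have hμeq : μ = t ^ 2 * q / p t := (eq_div_iff hpt).2 hμval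
    have hkey : t • C.mulVec w = (t ^ 2 * q / p t) • B.mulVec vt := by
      rw [← hCvt, hμ, hμeq]
    have hkey2 := congrArg (fun u => t⁻¹ • u) hkey
    simp only [smul_smul, inv_mul_cancel₀ ht, one_smul] at hkey2
    rw [hkey2]
    congr 1
    field_simp
  have hlim : Filter.Tendsto (fun t : ℝ => ((t * q) / p t) • B.mulVec (v₀ + t • w))
      (nhdsWithin (0:ℝ) {(0:ℝ)}ᶜ) (nhds 0) := by
    have hc : ContinuousAt (fun t : ℝ => ((t * q) / p t) • B.mulVec (v₀ + t • w)) 0 := by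
      apply ContinuousAt.fun_smul
      · exact (continuousAt_id.mul continuousAt_const).div hpcont.continuousAt hp0
      · have hbv : (fun t : ℝ => B.mulVec (v₀ + t • w)) = fun t => B.mulVec v₀ + t • B.mulVec w := by
          funext t; rw [Matrix.mulVec_add, Matrix.mulVec_smul]
        rw [hbv]
        exact continuousAt_const.add (continuousAt_id.smul continuousAt_const)
    have h00 : ((0:ℝ) * q / p 0) • B.mulVec (v₀ + (0:ℝ) • w) = 0 := by simp
    have hmt : Filter.Tendsto (fun t : ℝ => ((t * q) / p t) • B.mulVec (v₀ + t • w))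
        (nhdsWithin (0:ℝ) {(0:ℝ)}ᶜ) (nhds (((0:ℝ) * q / p 0) • B.mulVec (v₀ + (0:ℝ) • w))) :=
      hc.tendsto.mono_left nhdsWithin_le_nhds
    rwa [h00] at hmt
  have hconst : Filter.Tendsto (fun _ : ℝ => C.mulVec w)
      (nhdsWithin (0:ℝ) {(0:ℝ)}ᶜ) (nhds 0) :=
    Filter.Tendsto.congr' (by filter_upwards [hev] with t ht; exact ht.symm) hlim
  exact tendsto_nhds_unique tendsto_const_nhds hconst




/-- Hessians with rank at most one: if `c : U → ℝᵐ` is `C²` with `Dc(0) = 0` and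
`rank (Dc x) ≤ 1` on a neighborhood of `0`, then the Hessians of the components
of `c` at `0` are all multiples of a single symmetric matrix `H`. -/
theorem hessians_rank_at_most_one {n m : ℕ} (U : Set (Fin n → ℝ))
    (hU : IsOpen U) (hU0 : (0 : Fin n → ℝ) ∈ U)
    (c : Fin m → (Fin n → ℝ) → ℝ)
    (hC2 : ∀ ℓ, ContDiffOn ℝ 2 (c ℓ) U)
    (hD0 : ∀ ℓ, fderiv ℝ (c ℓ) 0 = 0)
    (hrank : ∀ x ∈ U,
      (Matrix.of fun (ℓ : Fin m) (i : Fin n) =>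
        fderiv ℝ (c ℓ) x (Pi.single i 1)).rank ≤ 1) :
    ∃ (α : Fin m → ℝ) (H : Matrix (Fin n) (Fin n) ℝ), H.IsSymm ∧
      ∀ ℓ, (Matrix.of fun (i j : Fin n) =>
        iteratedFDeriv ℝ 2 (c ℓ) 0 ![Pi.single i 1, Pi.single j 1]) = α ℓ • H := by
  classical
  have hmem : U ∈ nhds (0 : Fin n → ℝ) := hU.mem_nhds hU0
  have hd2 : ∀ ℓ, DifferentiableAt ℝ (fderiv ℝ (c ℓ)) 0 := by
    intro ℓ
    have h1 : ContDiffOn ℝ 1 (fderiv ℝ (c ℓ)) U := (hC2 ℓ).fderiv_of_isOpen hU (by norm_num)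
    exact (h1.differentiableOn one_ne_zero).differentiableAt hmem
  set D2 : Fin m → (Fin n → ℝ) →L[ℝ] (Fin n → ℝ) →L[ℝ] ℝ :=
    fun ℓ => fderiv ℝ (fderiv ℝ (c ℓ)) 0 with hD2
  have hsymm : ∀ ℓ v w, D2 ℓ v w = D2 ℓ w v := fun ℓ =>
    ((hC2 ℓ).contDiffAt hmem).isSymmSndFDerivAt (by simp)
  -- slope limits
  have hslope : ∀ ℓ i (v : Fin n → ℝ),
      Filter.Tendsto (fun t : ℝ => t⁻¹ * fderiv ℝ (c ℓ) (t • v) (Pi.single i 1))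
        (nhdsWithin (0:ℝ) {(0:ℝ)}ᶜ) (nhds (D2 ℓ v (Pi.single i 1))) := by
    intro ℓ i v
    have happ : HasFDerivAt (fun x => fderiv ℝ (c ℓ) x (Pi.single i 1))
        ((ContinuousLinearMap.apply ℝ ℝ (Pi.single i 1)).comp (D2 ℓ)) ((0:ℝ) • v) := by
      rw [zero_smul]
      exact (ContinuousLinearMap.apply ℝ ℝ (Pi.single i 1)).hasFDerivAt.comp 0 (hd2 ℓ).hasFDerivAt
    have hline : HasDerivAt (fun t : ℝ => t • v) v 0 := by
      simpa using (hasDerivAt_id (0:ℝ)).smul_const v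
    have hcomp : HasDerivAt (fun t : ℝ => fderiv ℝ (c ℓ) (t • v) (Pi.single i 1))
        (D2 ℓ v (Pi.single i 1)) 0 := by
      have h3 := happ.comp_hasDerivAt (0:ℝ) hline
      exact h3
    have h4 := hcomp.tendsto_slope_zero
    refine h4.congr fun t => ?_
    simp [hD0 ℓ]
  -- minor identity near 0
  have hminor : ∀ x ∈ U, ∀ ℓ k i j,
      fderiv ℝ (c ℓ) x (Pi.single i 1) * fderiv ℝ (c k) x (Pi.single j 1)
        = fderiv ℝ (c ℓ) x (Pi.single j 1) * fderiv ℝ (c k) x (Pi.single i 1) := by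
    intro x hx ℓ k i j
    exact aux_minor_eq_zero _ (hrank x hx) ℓ k i j
  -- key parallel identity
  have hpar : ∀ (v : Fin n → ℝ) (ℓ k : Fin m) (i j : Fin n),
      D2 ℓ v (Pi.single i 1) * D2 k v (Pi.single j 1)
        = D2 ℓ v (Pi.single j 1) * D2 k v (Pi.single i 1) := by
    intro v ℓ k i j
    have hcont : Continuous (fun t : ℝ => t • v) := by continuity
    have htend : Filter.Tendsto (fun t : ℝ => t • v) (nhds 0) (nhds 0) := by
      simpa using hcont.tendsto 0
    have hmemv : ∀ᶠ t in nhdsWithin (0:ℝ) {(0:ℝ)}ᶜ, (t • v) ∈ U :=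
      (htend.mono_left nhdsWithin_le_nhds).eventually (hU.eventually_mem hU0)
    have h1 := (hslope ℓ i v).mul (hslope k j v)
    have h2 := (hslope ℓ j v).mul (hslope k i v)
    have heq : (fun t : ℝ => (t⁻¹ * fderiv ℝ (c ℓ) (t • v) (Pi.single i 1))
          * (t⁻¹ * fderiv ℝ (c k) (t • v) (Pi.single j 1)))
        =ᶠ[nhdsWithin (0:ℝ) {(0:ℝ)}ᶜ]
        (fun t : ℝ => (t⁻¹ * fderiv ℝ (c ℓ) (t • v) (Pi.single j 1))
          * (t⁻¹ * fderiv ℝ (c k) (t • v) (Pi.single i 1))) := by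
      filter_upwards [hmemv] with t htU
      have hab := hminor _ htU ℓ k i j
      linear_combination t⁻¹ * t⁻¹ * hab
    exact tendsto_nhds_unique (Filter.Tendsto.congr' heq h1) h2
  -- Hessian matrices
  set Hm : Fin m → Matrix (Fin n) (Fin n) ℝ :=
    fun ℓ => Matrix.of (fun i j => D2 ℓ (Pi.single i 1) (Pi.single j 1)) with hHm
  have hHsymm : ∀ ℓ, (Hm ℓ).IsSymm := by
    intro ℓ
    rw [Matrix.IsSymm]
    ext i j
    simp only [Matrix.transpose_apply, hHm, Matrix.of_apply]
    exact hsymm ℓ (Pi.single j 1) (Pi.single i 1)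
  have hmv : ∀ ℓ (v : Fin n → ℝ) i, (Hm ℓ).mulVec v i = D2 ℓ v (Pi.single i 1) := by
    intro ℓ v i
    have hv : v = ∑ j, v j • (Pi.single j 1 : Fin n → ℝ) := by
      funext a
      simp [Pi.single_apply, Finset.sum_apply]
    have hlin : D2 ℓ v = ∑ j, v j • D2 ℓ (Pi.single j 1) := by
      conv_lhs => rw [hv]
      rw [map_sum]
      exact Finset.sum_congr rfl fun j _ => (D2 ℓ).map_smul _ _
    have h5 : D2 ℓ v (Pi.single i 1) = ∑ j, v j * D2 ℓ (Pi.single j 1) (Pi.single i 1) := by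
      rw [hlin]
      simp [ContinuousLinearMap.sum_apply]
    rw [h5, Matrix.mulVec, dotProduct]
    refine Finset.sum_congr rfl fun j _ => ?_
    simp only [hHm, Matrix.of_apply]
    rw [hsymm ℓ (Pi.single j 1) (Pi.single i 1)]
    ring
  have hparM : ∀ (ℓ k : Fin m) (v : Fin n → ℝ) (i j : Fin n),
      (Hm ℓ).mulVec v i * (Hm k).mulVec v j = (Hm ℓ).mulVec v j * (Hm k).mulVec v i := by
    intro ℓ k v i j
    rw [hmv, hmv, hmv, hmv]
    exact hpar v ℓ k i j
  have hgoal : ∀ ℓ, (Matrix.of fun (i j : Fin n) =>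
      iteratedFDeriv ℝ 2 (c ℓ) 0 ![Pi.single i 1, Pi.single j 1]) = Hm ℓ := by
    intro ℓ
    ext i j
    rw [Matrix.of_apply, iteratedFDeriv_two_apply]
    simp [hHm, hD2]
  by_cases hall : ∀ ℓ, Hm ℓ = 0
  · refine ⟨fun _ => 0, 0, ?_, fun ℓ => ?_⟩
    · rw [Matrix.IsSymm]; simp
    · rw [hgoal ℓ, hall ℓ]; simp
  · push_neg at hall
    obtain ⟨ℓ₀, hℓ₀⟩ := hall
    have hex : ∀ ℓ, ∃ lam : ℝ, Hm ℓ = lam • Hm ℓ₀ := fun ℓ =>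
      aux_proportional (Hm ℓ) (Hm ℓ₀) (hHsymm ℓ) (hHsymm ℓ₀) hℓ₀
        (fun v i j => hparM ℓ ℓ₀ v i j)
    choose α hα using hex
    exact ⟨α, Hm ℓ₀, hHsymm ℓ₀, fun ℓ => by rw [hgoal ℓ]; exact hα ℓ⟩
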